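/- arXiv:math/0409267 — 11 statements merged into one kernel-verified Lean document; each statement's English description precedes it below -/
import Mathlib

section
/- If S is a partial isometry in a C*-algebra B and H : A → A is a positive linear map on a closed *-subalgebra A ⊆ B such that S*aS = H(a)S*S for all a ∈ A, then H(a)S*S = S*S H(a) for every a ∈ A. -/
/-- If `S` is a partial isometry in a C*-algebra `B` and `H : A → A` is a positive
bounded linear map on a closed *-subalgebra `A ⊆ B` such that `S* a S = H(a) S* S`
for all `a ∈ A`, then `H(a) S* S = S* S H(a)` for every `a ∈ A`. -/
theorem stmt0
    {B : Type*} [CStarAlgebra B] [PartialOrder B] [StarOrderedRing B]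
    (A : StarSubalgebra ℂ B) (hA : IsClosed (A : Set B))
    (S : B) (hS : S * star S * S = S)
    (H : A →L[ℂ] A)
    (hHpos : ∀ a : A, 0 ≤ (a : B) → 0 ≤ (H a : B))
    (hcov : ∀ a : A, star S * (a : B) * S = (H a : B) * (star S * S)) :
    ∀ a : A, (H a : B) * (star S * S) = (star S * S) * (H a : B) := by
  haveI : IsClosed ((A : Set B)) := hA
  letI pOrd : PartialOrder ↥A := CStarAlgebra.spectralOrder _
  letI sOrd : @StarOrderedRing ↥A _ pOrd _ := CStarAlgebra.spectralOrderedRing _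
  set P := star S * S with hP
  have hSstar : star S * S * star S = star S := by
    have := congrArg star hS
    simpa [star_mul, mul_assoc] using this
  have hPsa : IsSelfAdjoint P := by simp [hP, star_mul, IsSelfAdjoint, mul_assoc]
  have key : ∀ a : A, P * ((H a : B) * P) = (H a : B) * P := by
    intro a
    rw [← hcov a, hP, show star S * S * (star S * (a : B) * S)
        = (star S * S * star S) * (a : B) * S by simp only [mul_assoc], hSstar]
  have key2 : ∀ a : A, 0 ≤ (a : B) → (H a : B) * P = P * (H a : B) := by
    intro a ha
    have hsa : IsSelfAdjoint ((H a : B)) := IsSelfAdjoint.of_nonneg (hHpos a ha)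
    have h1 : (H a : B) * P = P * ((H a : B) * P) := (key a).symm
    have h2 : star ((H a : B) * P) = (H a : B) * P := by
      conv_lhs => rw [h1]
      simp only [star_mul, hPsa.star_eq, hsa.star_eq, mul_assoc]
      exact key a
    calc (H a : B) * P = star ((H a : B) * P) := h2.symm
      _ = star P * star ((H a : B)) := star_mul _ _
      _ = P * (H a : B) := by rw [hPsa.star_eq, hsa.star_eq]
  have hcoe : ∀ x : ↥A, pOrd.le 0 x → 0 ≤ (x : B) := by
    intro x hx
    have hx' := (@StarOrderedRing.nonneg_iff ↥A _ pOrd _ sOrd x).mp hx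
    refine AddSubmonoid.closure_induction (motive := fun (y : ↥A) _ => 0 ≤ (y : B)) ?_ (by simp) ?_ hx'
    · rintro y ⟨c, rfl⟩; push_cast; exact star_mul_self_nonneg _
    · intro y z _ _ hy hz; push_cast; exact add_nonneg hy hz
  intro a
  have hmem := Submodule.eq_top_iff'.mp
    (@CStarAlgebra.span_nonneg ↥A _ _ _ _ _ _ _ _ pOrd sOrd) a
  induction hmem using Submodule.span_induction with
  | mem x hx => exact key2 x (hcoe x hx)
  | zero => simp
  | add x y _ _ hx hy => simp [add_mul, mul_add, hx, hy]
  | smul c x _ hx => simp [smul_mul_assoc, mul_smul_comm, hx]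
end

section
/- Under the covariance axioms S*aS = H(a)S*S and SaS* = V(a)SS*, together with the nondegeneracy condition that xS = yS implies x = y for x,y in the C*-algebra generated by V(A), one has V(H(V(a))) = V(a) for all a ∈ A. -/
/-- Under the covariance axioms `S* a S = H(a) S* S` and `S a S* = V(a) S S*`,
together with the nondegeneracy condition that `x S = y S` implies `x = y` for
`x, y` in the C*-algebra generated by `V(A)`, one has `V(H(V(a))) = V(a)` for all
`a ∈ A`. -/
theorem stmt2
    {B : Type*} [CStarAlgebra B] [PartialOrder B] [StarOrderedRing B]
    (A : StarSubalgebra ℂ B) (hA : IsClosed (A : Set B))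
    (S : B) (hS : S * star S * S = S)
    (V H : A →L[ℂ] A)
    (hVpos : ∀ a : A, 0 ≤ (a : B) → 0 ≤ (V a : B))
    (hHpos : ∀ a : A, 0 ≤ (a : B) → 0 ≤ (H a : B))
    (hcovH : ∀ a : A, star S * (a : B) * S = (H a : B) * (star S * S))
    (hcovV : ∀ a : A, S * (a : B) * star S = (V a : B) * (S * star S))
    (hnd : ∀ x y : B,
      x ∈ (StarSubalgebra.topologicalClosure
        (StarAlgebra.adjoin ℂ (Set.range (fun a : A => (V a : B))))) →
      y ∈ (StarSubalgebra.topologicalClosure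
        (StarAlgebra.adjoin ℂ (Set.range (fun a : A => (V a : B))))) →
      x * S = y * S → x = y) :
    ∀ a : A, V (H (V a)) = V a := by
  intro a
  have mem : ∀ b : A, (V b : B) ∈ (StarSubalgebra.topologicalClosure
      (StarAlgebra.adjoin ℂ (Set.range (fun a : A => (V a : B))))) := by
    intro b
    exact StarSubalgebra.le_topologicalClosure _
      (StarAlgebra.subset_adjoin ℂ _ ⟨b, rfl⟩)
  -- Key: S S* (V a) S = (V a) S
  have h2 : S * star S * (V a : B) * (S * star S) = (V a : B) * (S * star S) := by
    have := hcovV a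
    calc S * star S * (V a : B) * (S * star S)
        = S * star S * ((V a : B) * (S * star S)) := by simp only [mul_assoc]
      _ = S * star S * (S * (a : B) * star S) := by rw [← this]
      _ = (S * star S * S) * (a : B) * star S := by simp only [mul_assoc]
      _ = S * (a : B) * star S := by rw [hS]
      _ = (V a : B) * (S * star S) := this
  have h3 : S * star S * (V a : B) * S = (V a : B) * S := by
    calc S * star S * (V a : B) * S
        = S * star S * (V a : B) * (S * star S) * S := by
          rw [mul_assoc (S * star S * (V a : B)) (S * star S) S, hS]
      _ = (V a : B) * (S * star S) * S := by rw [h2]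
      _ = (V a : B) * S := by rw [mul_assoc, hS]
  have h1 : (V (H (V a)) : B) * S = (V a : B) * S := by
    calc (V (H (V a)) : B) * S
        = (V (H (V a)) : B) * (S * star S) * S := by
          rw [mul_assoc, hS]
      _ = (S * (H (V a) : B) * star S) * S := by rw [← hcovV (H (V a))]
      _ = S * ((H (V a) : B) * (star S * S)) := by simp only [mul_assoc]
      _ = S * (star S * (V a : B) * S) := by rw [← hcovH (V a)]
      _ = S * star S * (V a : B) * S := by simp only [mul_assoc]
      _ = (V a : B) * S := h3
  have := hnd _ _ (mem (H (V a))) (mem a) h1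
  exact Subtype.ext this
end

section
/- Under the covariance axioms S*aS = H(a)S*S and SaS* = V(a)SS*, together with nondegeneracy (xS = yS ⟹ x = y for x, y in C*(V(A))), one has V(aH(b)) = V(a)V(H(b)) for all a, b ∈ A. -/
/-- Under the covariance axioms `S* a S = H(a) S* S` and `S a S* = V(a) S S*`,
together with the nondegeneracy condition that `x S = y S` implies `x = y` for
`x, y` in the C*-algebra generated by `V(A)`, one has `V(a * H(b)) = V(a) * V(H(b))` for all `a, b ∈ A`. -/
theorem stmt3
    {B : Type*} [CStarAlgebra B] [PartialOrder B] [StarOrderedRing B]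
    (A : StarSubalgebra ℂ B) (hA : IsClosed (A : Set B))
    (S : B) (hS : S * star S * S = S)
    (V H : A →L[ℂ] A)
    (hVpos : ∀ a : A, 0 ≤ (a : B) → 0 ≤ (V a : B))
    (hHpos : ∀ a : A, 0 ≤ (a : B) → 0 ≤ (H a : B))
    (hcovH : ∀ a : A, star S * (a : B) * S = (H a : B) * (star S * S))
    (hcovV : ∀ a : A, S * (a : B) * star S = (V a : B) * (S * star S))
    (hnd : ∀ x y : B,
      x ∈ (StarSubalgebra.topologicalClosure
        (StarAlgebra.adjoin ℂ (Set.range (fun a : A => (V a : B))))) →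
      y ∈ (StarSubalgebra.topologicalClosure
        (StarAlgebra.adjoin ℂ (Set.range (fun a : A => (V a : B))))) →
      x * S = y * S → x = y) :
    ∀ a b : A, V (a * H b) = V a * V (H b) := by
  intro a b
  have hmem : ∀ c : A, (V c : B) ∈ (StarSubalgebra.topologicalClosure
      (StarAlgebra.adjoin ℂ (Set.range (fun a : A => (V a : B))))) := fun c =>
    StarSubalgebra.le_topologicalClosure _
      (StarAlgebra.subset_adjoin ℂ _ ⟨c, rfl⟩)
  have hcoe : ((a * H b : A) : B) = (a : B) * (H b : B) := rfl
  have key : (V (a * H b) : B) * S = ((V a : B) * (V (H b) : B)) * S := by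
    calc (V (a * H b) : B) * S
        = ((V (a * H b) : B) * (S * star S)) * S := by
          conv_lhs => rw [← hS]
          noncomm_ring
      _ = (S * ((a : B) * (H b : B)) * star S) * S := by rw [← hcovV, hcoe]
      _ = S * (a : B) * ((H b : B) * (star S * S)) := by noncomm_ring
      _ = S * (a : B) * (star S * (b : B) * S) := by rw [← hcovH]
      _ = ((V a : B) * (S * star S)) * ((b : B) * S) := by rw [← hcovV]; noncomm_ring
      _ = (V a : B) * (S * ((H b : B) * (star S * S))) := by rw [← hcovH]; noncomm_ring
      _ = (V a : B) * (((V (H b) : B) * (S * star S)) * S) := by rw [← hcovV]; noncomm_ring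
      _ = ((V a : B) * (V (H b) : B)) * S := by
          rw [mul_assoc (V (H b) : B), hS]; noncomm_ring
  have := hnd _ _ (hmem _) (mul_mem (hmem a) (hmem (H b))) key
  exact Subtype.ext this
end

section
/- Let (V, H) be an interaction over a C*-algebra A. Then V(A) is a closed *-subalgebra of A. -/
open ComplexConjugate ComplexStarModule

/-- A positive `ℂ`-linear map on a C*-algebra is star-preserving. -/
lemma star_map_of_pos
    {A : Type*} [CStarAlgebra A] [PartialOrder A] [StarOrderedRing A]
    (V : A →L[ℂ] A) (hVpos : ∀ a : A, 0 ≤ a → 0 ≤ V a) (a : A) :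
    V (star a) = star (V a) := by
  have hsa : ∀ x : A, IsSelfAdjoint x → IsSelfAdjoint (V x) := by
    intro x hx
    have hdecomp : x⁺ - x⁻ = x := CFC.posPart_sub_negPart x hx
    have h1 : IsSelfAdjoint (V x⁺) := (hVpos _ (CFC.posPart_nonneg x)).isSelfAdjoint
    have h2 : IsSelfAdjoint (V x⁻) := (hVpos _ (CFC.negPart_nonneg x)).isSelfAdjoint
    have : V x = V x⁺ - V x⁻ := by rw [← map_sub, hdecomp]
    rw [this]
    exact h1.sub h2
  have hre : IsSelfAdjoint (V (ℜ a : A)) := hsa _ (ℜ a).2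
  have him : IsSelfAdjoint (V (ℑ a : A)) := hsa _ (ℑ a).2
  have ha : (ℜ a : A) + Complex.I • (ℑ a : A) = a := realPart_add_I_smul_imaginaryPart a
  have hstar : star a = (ℜ a : A) - Complex.I • (ℑ a : A) := by
    rw [← ha]
    rw [star_add, star_smul]
    rw [(ℜ a).2.star_eq, (ℑ a).2.star_eq]
    simp [Complex.star_def, Complex.conj_I, sub_eq_add_neg, neg_smul]
  calc V (star a) = V (ℜ a : A) - Complex.I • V (ℑ a : A) := by
        rw [hstar, map_sub, map_smul]
    _ = star (V (ℜ a : A) + Complex.I • V (ℑ a : A)) := by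
        rw [star_add, star_smul, hre.star_eq, him.star_eq]
        simp [Complex.star_def, Complex.conj_I, sub_eq_add_neg, neg_smul]
    _ = star (V a) := by
        congr 1
        conv_rhs => rw [← ha]
        rw [map_add, map_smul]

/-- Let `(V, H)` be an interaction over a C*-algebra `A`. Then `V(A)` is a closed
*-subalgebra of `A`: the range of `V` is norm-closed, closed under multiplication
and closed under the involution (it is automatically a linear subspace, being the
range of a linear map). -/
theorem stmt4
    {A : Type*} [CStarAlgebra A] [PartialOrder A] [StarOrderedRing A]
    (V H : A →L[ℂ] A)
    (hVpos : ∀ a : A, 0 ≤ a → 0 ≤ V a)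
    (hHpos : ∀ a : A, 0 ≤ a → 0 ≤ H a)
    (hVHV : ∀ a : A, V (H (V a)) = V a)
    (hHVH : ∀ a : A, H (V (H a)) = H a)
    (hVmul : ∀ x y : A, (x ∈ Set.range H ∨ y ∈ Set.range H) → V (x * y) = V x * V y)
    (hHmul : ∀ x y : A, (x ∈ Set.range V ∨ y ∈ Set.range V) → H (x * y) = H x * H y) :
    IsClosed (Set.range V) ∧
    (∀ x ∈ Set.range V, ∀ y ∈ Set.range V, x * y ∈ Set.range V) ∧
    (∀ x ∈ Set.range V, star x ∈ Set.range V) := by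
  have hrange : Set.range V = {a : A | V (H a) = a} := by
    ext a
    constructor
    · rintro ⟨b, rfl⟩; exact hVHV b
    · intro h; exact ⟨H a, h⟩
  refine ⟨?_, ?_, ?_⟩
  · rw [hrange]
    have : {a : A | V (H a) = a} = (fun a : A => V (H a) - a) ⁻¹' {0} := by
      ext a; simp [sub_eq_zero]
    rw [this]
    exact isClosed_singleton.preimage ((V.continuous.comp H.continuous).sub continuous_id)
  · rintro x ⟨a, rfl⟩ y ⟨b, rfl⟩
    refine ⟨H (V a) * H (V b), ?_⟩
    rw [hVmul _ _ (Or.inl ⟨V a, rfl⟩), hVHV, hVHV]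
  · rintro x ⟨a, rfl⟩
    exact ⟨star a, star_map_of_pos V hVpos a⟩
end

section
/- Let (V, H) be an interaction over a C*-algebra A. Then E_V := V ∘ H is a conditional expectation from A onto V(A); that is, E_V is positive, idempotent with range V(A), and satisfies E_V(ab) = E_V(a)b and E_V(ba) = bE_V(a) for all a ∈ A and b ∈ V(A). -/
/-- Let `(V, H)` be an interaction over a C*-algebra `A`.  Then `E_V := V ∘ H` is a
conditional expectation from `A` onto `V(A)`: it is positive, idempotent with range
`V(A)`, and satisfies `E_V(a b) = E_V(a) b` and `E_V(b a) = b E_V(a)` for all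
`a ∈ A` and `b ∈ V(A)`. -/
theorem stmt5
    {A : Type*} [CStarAlgebra A] [PartialOrder A] [StarOrderedRing A]
    (V H : A →L[ℂ] A)
    (hVpos : ∀ a : A, 0 ≤ a → 0 ≤ V a)
    (hHpos : ∀ a : A, 0 ≤ a → 0 ≤ H a)
    (hVHV : ∀ a : A, V (H (V a)) = V a)
    (hHVH : ∀ a : A, H (V (H a)) = H a)
    (hVmul : ∀ x y : A, (x ∈ Set.range H ∨ y ∈ Set.range H) → V (x * y) = V x * V y)
    (hHmul : ∀ x y : A, (x ∈ Set.range V ∨ y ∈ Set.range V) → H (x * y) = H x * H y) :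
    (∀ a : A, 0 ≤ a → 0 ≤ V (H a)) ∧
    (∀ a : A, V (H (V (H a))) = V (H a)) ∧
    (Set.range (fun a : A => V (H a)) = Set.range V) ∧
    (∀ a : A, ∀ b ∈ Set.range V, V (H (a * b)) = V (H a) * b) ∧
    (∀ a : A, ∀ b ∈ Set.range V, V (H (b * a)) = b * V (H a)) := by
  refine ⟨fun a ha => hVpos _ (hHpos _ ha), fun a => hVHV (H a), ?_, ?_, ?_⟩
  · apply Set.eq_of_subset_of_subset
    · rintro _ ⟨a, rfl⟩; exact ⟨H a, rfl⟩
    · rintro _ ⟨a, rfl⟩; exact ⟨V a, hVHV a⟩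
  · rintro a _ ⟨c, rfl⟩
    rw [hHmul a (V c) (Or.inr ⟨c, rfl⟩), hVmul (H a) (H (V c)) (Or.inl ⟨a, rfl⟩), hVHV]
  · rintro a _ ⟨c, rfl⟩
    rw [hHmul (V c) a (Or.inl ⟨c, rfl⟩), hVmul (H (V c)) (H a) (Or.inr ⟨a, rfl⟩), hVHV]
end

section
/- Let (V, H) be an interaction over a C*-algebra A. Then the restriction V₁ : H(A) → V(A) of V and the restriction H₁ : V(A) → H(A) of H are mutually inverse *-isomorphisms. -/
open Complex
open scoped ComplexStarModule

/-- A positive continuous linear map on a C*-algebra is star-preserving. -/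
lemma map_star_of_pos_aux {A : Type*} [CStarAlgebra A] [PartialOrder A] [StarOrderedRing A]
    (φ : A →L[ℂ] A) (hpos : ∀ a : A, 0 ≤ a → 0 ≤ φ a) (a : A) :
    φ (star a) = star (φ a) := by
  have hsa : ∀ b : A, 0 ≤ b → star (φ b) = φ b := fun b hb =>
    (IsSelfAdjoint.of_nonneg (hpos b hb)).star_eq
  have h1 := CStarAlgebra.linear_combination_nonneg a
  set p₁ := ((ℜ a : A)⁺ : A)
  set p₂ := ((ℜ a : A)⁻ : A)
  set p₃ := ((ℑ a : A)⁺ : A)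
  set p₄ := ((ℑ a : A)⁻ : A)
  have hp₁ : 0 ≤ p₁ := CFC.posPart_nonneg _
  have hp₂ : 0 ≤ p₂ := CFC.negPart_nonneg _
  have hp₃ : 0 ≤ p₃ := CFC.posPart_nonneg _
  have hp₄ : 0 ≤ p₄ := CFC.negPart_nonneg _
  have hsp : ∀ b : A, 0 ≤ b → star b = b := fun b hb => (IsSelfAdjoint.of_nonneg hb).star_eq
  have hstar : star a = (p₁ - p₂) - (I • p₃ - I • p₄) := by
    rw [← h1]
    simp only [star_add, star_sub, star_smul, Complex.star_def, Complex.conj_I, neg_smul,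
      hsp p₁ hp₁, hsp p₂ hp₂, hsp p₃ hp₃, hsp p₄ hp₄]
    abel
  rw [hstar, ← h1]
  simp only [map_sub, map_add, map_smul]
  rw [star_add, star_sub, star_sub, star_smul, star_smul,
    hsa p₁ hp₁, hsa p₂ hp₂, hsa p₃ hp₃, hsa p₄ hp₄]
  simp only [Complex.star_def, Complex.conj_I, neg_smul]
  abel

/-- Let `(V, H)` be an interaction over a C*-algebra `A`.  Then the restriction
`V₁ : H(A) → V(A)` of `V` and the restriction `H₁ : V(A) → H(A)` of `H` are
mutually inverse *-isomorphisms: they are inverse to each other, multiplicative and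
star-preserving (and map the respective ranges onto each other). -/
theorem stmt6
    {A : Type*} [CStarAlgebra A] [PartialOrder A] [StarOrderedRing A]
    (V H : A →L[ℂ] A)
    (hVpos : ∀ a : A, 0 ≤ a → 0 ≤ V a)
    (hHpos : ∀ a : A, 0 ≤ a → 0 ≤ H a)
    (hVHV : ∀ a : A, V (H (V a)) = V a)
    (hHVH : ∀ a : A, H (V (H a)) = H a)
    (hVmul : ∀ x y : A, (x ∈ Set.range H ∨ y ∈ Set.range H) → V (x * y) = V x * V y)
    (hHmul : ∀ x y : A, (x ∈ Set.range V ∨ y ∈ Set.range V) → H (x * y) = H x * H y) :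
    (∀ x ∈ Set.range H, V x ∈ Set.range V) ∧
    (∀ y ∈ Set.range V, H y ∈ Set.range H) ∧
    (∀ x ∈ Set.range H, H (V x) = x) ∧
    (∀ y ∈ Set.range V, V (H y) = y) ∧
    (∀ x ∈ Set.range H, ∀ y ∈ Set.range H, V (x * y) = V x * V y) ∧
    (∀ x ∈ Set.range H, V (star x) = star (V x)) ∧
    (∀ x ∈ Set.range V, ∀ y ∈ Set.range V, H (x * y) = H x * H y) ∧
    (∀ x ∈ Set.range V, H (star x) = star (H x)) := by
  refine ⟨fun x _ => ⟨x, rfl⟩, fun y _ => ⟨y, rfl⟩, ?_, ?_, ?_, ?_, ?_, ?_⟩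
  · rintro x ⟨a, rfl⟩; exact hHVH a
  · rintro y ⟨a, rfl⟩; exact hVHV a
  · intro x hx y _; exact hVmul x y (Or.inl hx)
  · intro x _; exact map_star_of_pos_aux V hVpos x
  · intro x hx y _; exact hHmul x y (Or.inl hx)
  · intro x _; exact map_star_of_pos_aux H hHpos x
end

section
/- Let (π, S, B) be a covariant representation of an interaction (V, H) satisfying the nondegeneracy condition (i): for x, y ∈ V(A), π(x)S = π(y)S implies x = y. Then condition (ii) also holds: for x, y ∈ H(A), Sπ(x) = Sπ(y) implies x = y. -/
/-- Let `(π, S, B)` be a covariant representation of an interaction `(V, H)` over a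
C*-algebra `A`, satisfying the nondegeneracy condition (i): for `x, y ∈ V(A)`,
`π(x) S = π(y) S` implies `x = y`.  Then condition (ii) also holds: for
`x, y ∈ H(A)`, `S π(x) = S π(y)` implies `x = y`. -/
theorem stmt12
    {A : Type*} [CStarAlgebra A] [PartialOrder A] [StarOrderedRing A]
    {B : Type*} [CStarAlgebra B]
    (V H : A →L[ℂ] A)
    (hVpos : ∀ a : A, 0 ≤ a → 0 ≤ V a)
    (hHpos : ∀ a : A, 0 ≤ a → 0 ≤ H a)
    (hVHV : ∀ a : A, V (H (V a)) = V a)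
    (hHVH : ∀ a : A, H (V (H a)) = H a)
    (hVmul : ∀ x y : A, (x ∈ Set.range H ∨ y ∈ Set.range H) → V (x * y) = V x * V y)
    (hHmul : ∀ x y : A, (x ∈ Set.range V ∨ y ∈ Set.range V) → H (x * y) = H x * H y)
    (π : A →⋆ₐ[ℂ] B) (S : B) (hS : S * star S * S = S)
    (hcovV : ∀ a : A, S * π a * star S = π (V a) * (S * star S))
    (hcovH : ∀ a : A, star S * π a * S = π (H a) * (star S * S))
    (hnd : ∀ x ∈ Set.range V, ∀ y ∈ Set.range V, π x * S = π y * S → x = y) :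
    ∀ x ∈ Set.range H, ∀ y ∈ Set.range H, S * π x = S * π y → x = y := by
  rintro x ⟨a, rfl⟩ y ⟨b, rfl⟩ h
  have e : ∀ c : A, S * π c * (star S * S) = π (V c) * S := by
    intro c
    calc S * π c * (star S * S) = (S * π c * star S) * S := by
          simp only [mul_assoc]
      _ = π (V c) * (S * star S) * S := by rw [hcovV]
      _ = π (V c) * S := by rw [mul_assoc, mul_assoc, ← mul_assoc S, hS]
  have key : π (V (H a)) * S = π (V (H b)) * S := by
    rw [← e, ← e, h]
  have hv := hnd _ ⟨H a, rfl⟩ _ ⟨H b, rfl⟩ key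
  calc H a = H (V (H a)) := (hHVH a).symm
    _ = H (V (H b)) := by rw [hv]
    _ = H b := hHVH b
end

section
/- Let (π, S, B) be a covariant representation of an interaction (V, H) over A. If the conditional expectation E_H = H∘V is faithful, then π is injective. -/
/-- Let `(π, S, B)` be a nondegenerate covariant representation of an interaction
`(V, H)` over a C*-algebra `A`.  If the conditional expectation `E_H = H ∘ V` is
faithful, then `π` is injective. -/
theorem stmt13
    {A : Type*} [CStarAlgebra A] [PartialOrder A] [StarOrderedRing A]
    {B : Type*} [CStarAlgebra B]
    (V H : A →L[ℂ] A)
    (hVpos : ∀ a : A, 0 ≤ a → 0 ≤ V a)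
    (hHpos : ∀ a : A, 0 ≤ a → 0 ≤ H a)
    (hVHV : ∀ a : A, V (H (V a)) = V a)
    (hHVH : ∀ a : A, H (V (H a)) = H a)
    (hVmul : ∀ x y : A, (x ∈ Set.range H ∨ y ∈ Set.range H) → V (x * y) = V x * V y)
    (hHmul : ∀ x y : A, (x ∈ Set.range V ∨ y ∈ Set.range V) → H (x * y) = H x * H y)
    (π : A →⋆ₐ[ℂ] B) (S : B) (hS : S * star S * S = S)
    (hcovV : ∀ a : A, S * π a * star S = π (V a) * (S * star S))
    (hcovH : ∀ a : A, star S * π a * S = π (H a) * (star S * S))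
    (hnd : ∀ x ∈ Set.range V, ∀ y ∈ Set.range V, π x * S = π y * S → x = y)
    (hfaithful : ∀ a : A, H (V (star a * a)) = 0 → a = 0) :
    Function.Injective π := by
  rw [injective_iff_map_eq_zero]
  intro a ha
  set b := star a * a with hb
  have hπb : π b = 0 := by
    rw [hb, map_mul, map_star, ha, star_zero, zero_mul]
  have h1 : π (V b) * (S * star S) = 0 := by
    rw [← hcovV, hπb, mul_zero, zero_mul]
  have h2 : π (V b) * S = 0 := by
    have h : π (V b) * (S * star S) * S = 0 := by rw [h1, zero_mul]
    rwa [mul_assoc, hS] at h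
  have hVb : V b = 0 := by
    have h0 : (0 : A) ∈ Set.range V := ⟨0, map_zero V⟩
    have := hnd (V b) ⟨b, rfl⟩ 0 h0 (by simp [h2])
    exact this
  have : H (V (star a * a)) = 0 := by rw [← hb, hVb, map_zero]
  exact hfaithful a this
end

section
/- In the setting of section 2 (A ⊆ B, S a partial isometry with S*aS = H(a)S*S, SaS* = V(a)SS*, and nondegeneracy), for any a₁,a₂,b₁,b₂,c₁,c₂ ∈ A one has (a₁Sa₂)(b₁Sb₂)*(c₁Sc₂) = a₁V(a₂b₂*) S H(b₁*c₁) c₂. Consequently the closed linear span Y of ASA is a ternary ring of operators (YY*Y ⊆ Y). -/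
/-- In the setting of section 2 (`A ⊆ B` a closed *-subalgebra, `S` a partial
isometry with `S* a S = H(a) S* S`, `S a S* = V(a) S S*`, `H(a)` commuting with
`S* S` and `V(a)` with `S S*`), for any `a₁, a₂, b₁, b₂, c₁, c₂ ∈ A` one has
`(a₁ S a₂)(b₁ S b₂)*(c₁ S c₂) = a₁ V(a₂ b₂*) S H(b₁* c₁) c₂`.  Consequently the
closed linear span `Y` of `A S A` is a ternary ring of operators: `Y Y* Y ⊆ Y`. -/
theorem stmt14
    {B : Type*} [CStarAlgebra B] [PartialOrder B] [StarOrderedRing B]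
    (A : StarSubalgebra ℂ B) (hA : IsClosed (A : Set B))
    (S : B) (hS : S * star S * S = S)
    (V H : A →L[ℂ] A)
    (hVpos : ∀ a : A, 0 ≤ (a : B) → 0 ≤ (V a : B))
    (hHpos : ∀ a : A, 0 ≤ (a : B) → 0 ≤ (H a : B))
    (hcovH : ∀ a : A, star S * (a : B) * S = (H a : B) * (star S * S))
    (hcovV : ∀ a : A, S * (a : B) * star S = (V a : B) * (S * star S))
    (hcommH : ∀ a : A, (H a : B) * (star S * S) = (star S * S) * (H a : B))
    (hcommV : ∀ a : A, (V a : B) * (S * star S) = (S * star S) * (V a : B)) :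
    (∀ a₁ a₂ b₁ b₂ c₁ c₂ : A,
      ((a₁ : B) * S * (a₂ : B)) * star ((b₁ : B) * S * (b₂ : B)) *
        ((c₁ : B) * S * (c₂ : B)) =
      (a₁ : B) * (V (a₂ * star b₂) : B) * S * (H (star b₁ * c₁) : B) * (c₂ : B)) ∧
    (∀ x ∈ (Submodule.span ℂ {x : B | ∃ a b : A, (a : B) * S * (b : B) = x}).topologicalClosure,
     ∀ y ∈ (Submodule.span ℂ {x : B | ∃ a b : A, (a : B) * S * (b : B) = x}).topologicalClosure,
     ∀ z ∈ (Submodule.span ℂ {x : B | ∃ a b : A, (a : B) * S * (b : B) = x}).topologicalClosure,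
      x * star y * z ∈
        (Submodule.span ℂ {x : B | ∃ a b : A, (a : B) * S * (b : B) = x}).topologicalClosure) := by
  -- key computation
  have key : ∀ x y : A, S * (x : B) * star S * (y : B) * S
      = (V x : B) * S * (H y : B) := by
    intro x y
    calc S * (x : B) * star S * (y : B) * S
        = (V x : B) * (S * star S) * (y : B) * S := by rw [hcovV]
      _ = (V x : B) * (S * (star S * (y : B) * S)) := by
          simp only [mul_assoc]
      _ = (V x : B) * (S * ((H y : B) * (star S * S))) := by rw [hcovH]
      _ = (V x : B) * (S * ((star S * S) * (H y : B))) := by rw [hcommH]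
      _ = (V x : B) * ((S * star S * S) * (H y : B)) := by
          simp only [mul_assoc]
      _ = (V x : B) * S * (H y : B) := by rw [hS, mul_assoc]
  have part1 : ∀ a₁ a₂ b₁ b₂ c₁ c₂ : A,
      ((a₁ : B) * S * (a₂ : B)) * star ((b₁ : B) * S * (b₂ : B)) *
        ((c₁ : B) * S * (c₂ : B)) =
      (a₁ : B) * (V (a₂ * star b₂) : B) * S * (H (star b₁ * c₁) : B) * (c₂ : B) := by
    intro a₁ a₂ b₁ b₂ c₁ c₂
    have h := key (a₂ * star b₂) (star b₁ * c₁)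
    have hc1 : ((a₂ * star b₂ : A) : B) = (a₂ : B) * star (b₂ : B) := by simp
    have hc2 : ((star b₁ * c₁ : A) : B) = star (b₁ : B) * (c₁ : B) := by simp
    rw [hc1, hc2] at h
    calc ((a₁ : B) * S * (a₂ : B)) * star ((b₁ : B) * S * (b₂ : B)) *
          ((c₁ : B) * S * (c₂ : B))
        = (a₁ : B) * (S * ((a₂ : B) * star (b₂ : B)) * star S *
            (star (b₁ : B) * (c₁ : B)) * S) * (c₂ : B) := by
          simp only [star_mul, mul_assoc]
      _ = (a₁ : B) * ((V (a₂ * star b₂) : B) * S * (H (star b₁ * c₁) : B)) * (c₂ : B) := by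
          rw [← h]
      _ = (a₁ : B) * (V (a₂ * star b₂) : B) * S * (H (star b₁ * c₁) : B) * (c₂ : B) := by
          simp only [mul_assoc]
  refine ⟨part1, ?_⟩
  set M : Set B := {x : B | ∃ a b : A, (a : B) * S * (b : B) = x} with hM
  set Y : Submodule ℂ B := Submodule.span ℂ M with hY
  -- Step 1: on the span itself
  have span_step : ∀ x ∈ Y, ∀ y ∈ Y, ∀ z ∈ Y, x * star y * z ∈ Y := by
    intro x hx y hy z hz
    induction hx using Submodule.span_induction with
    | mem x hxm =>
      induction hy using Submodule.span_induction with
      | mem y hym =>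
        induction hz using Submodule.span_induction with
        | mem z hzm =>
          obtain ⟨a₁, a₂, rfl⟩ := hxm
          obtain ⟨b₁, b₂, rfl⟩ := hym
          obtain ⟨c₁, c₂, rfl⟩ := hzm
          rw [part1 a₁ a₂ b₁ b₂ c₁ c₂]
          apply Submodule.subset_span
          refine ⟨a₁ * V (a₂ * star b₂), H (star b₁ * c₁) * c₂, ?_⟩
          push_cast
          simp only [mul_assoc]
        | zero => simp only [mul_zero]; exact Y.zero_mem
        | add z₁ z₂ _ _ h1 h2 =>
          rw [mul_add]; exact Y.add_mem h1 h2
        | smul c z _ h =>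
          rw [mul_smul_comm]; exact Y.smul_mem c h
      | zero => simp only [star_zero, mul_zero, zero_mul]; exact Y.zero_mem
      | add y₁ y₂ _ _ h1 h2 =>
        rw [star_add, mul_add, add_mul]; exact Y.add_mem h1 h2
      | smul c y _ h =>
        rw [star_smul, mul_smul_comm, smul_mul_assoc]
        exact Y.smul_mem _ h
    | zero => simp only [zero_mul]; exact Y.zero_mem
    | add x₁ x₂ _ _ h1 h2 =>
      rw [add_mul, add_mul]; exact Y.add_mem h1 h2
    | smul c x _ h =>
      rw [smul_mul_assoc, smul_mul_assoc]; exact Y.smul_mem c h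
  have hclosSet : (Y.topologicalClosure : Set B) = closure (Y : Set B) := rfl
  -- Step 2: extend x to closure
  have step2 : ∀ x ∈ Y.topologicalClosure, ∀ y ∈ Y, ∀ z ∈ Y,
      x * star y * z ∈ Y.topologicalClosure := by
    intro x hx y hy z hz
    have hc : Continuous (fun w : B => w * star y * z) := by fun_prop
    exact map_mem_closure (f := fun w : B => w * star y * z) hc hx
      (fun w hw => span_step w hw y hy z hz)
  have step3 : ∀ x ∈ Y.topologicalClosure, ∀ y ∈ Y.topologicalClosure, ∀ z ∈ Y,
      x * star y * z ∈ Y.topologicalClosure := by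
    intro x hx y hy z hz
    have hc : Continuous (fun w : B => x * star w * z) := by fun_prop
    have h2 : (fun w : B => x * star w * z) y ∈
        closure (Y.topologicalClosure : Set B) :=
      map_mem_closure (f := fun w : B => x * star w * z) hc hy
        (fun w hw => step2 x hx w hw z hz)
    rwa [IsClosed.closure_eq (Submodule.isClosed_topologicalClosure Y)] at h2
  intro x hx y hy z hz
  have hc : Continuous (fun w : B => x * star y * w) := by fun_prop
  have h3 : (fun w : B => x * star y * w) z ∈
      closure (Y.topologicalClosure : Set B) :=
    map_mem_closure (f := fun w : B => x * star y * w) hc hz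
      (fun w hw => step3 x hx y hy w hw)
  rwa [IsClosed.closure_eq (Submodule.isClosed_topologicalClosure Y)] at h3
end

section
/- Let X be a ternary ring of operators (a closed subspace of a C*-algebra with XX*X ⊆ X). Then every right operator on X commutes with every left operator on X. (A left operator L satisfies [x, L(y), z] = [x, y, L*(z)] for some adjoint L*, and a right operator R satisfies [R(x), y, z] = [x, R*(y), z], where [x,y,z] = xy*z.) -/
/-- Let `X` be a ternary ring of operators (a closed subspace of a C*-algebra with
`X X* X ⊆ X`), with ternary operation `[x,y,z] = x y* z`.  If `L` is a left
operator (with adjoint `Ls`, so `[x, L y, z] = [x, y, Ls z]` and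
`[x, Ls y, z] = [x, y, L z]`) and `R` is a right operator (with adjoint `Rs`, so
`[R x, y, z] = [x, Rs y, z]` and `[Rs x, y, z] = [x, R y, z]`), then `R` commutes
with `L`. -/
theorem stmt16
    {B : Type*} [CStarAlgebra B]
    (X : Submodule ℂ B) (hXc : IsClosed (X : Set B))
    (hTRO : ∀ x ∈ X, ∀ y ∈ X, ∀ z ∈ X, x * star y * z ∈ X)
    (L Ls R Rs : X → X)
    (hL : ∀ x y z : X, (x : B) * star (L y : B) * (z : B) = (x : B) * star (y : B) * (Ls z : B))
    (hLs : ∀ x y z : X, (x : B) * star (Ls y : B) * (z : B) = (x : B) * star (y : B) * (L z : B))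
    (hR : ∀ x y z : X, (R x : B) * star (y : B) * (z : B) = (x : B) * star (Rs y : B) * (z : B))
    (hRs : ∀ x y z : X, (Rs x : B) * star (y : B) * (z : B) = (x : B) * star (R y : B) * (z : B)) :
    ∀ x : X, R (L x) = L (R x) := by
  intro x
  set δ : X := R (L x) - L (R x) with hδ
  have key : ∀ u v : X, (u : B) * star (δ : B) * (v : B) = 0 := by
    intro u v
    have h1 : (u : B) * star (R (L x) : B) * (v : B)
        = (Rs u : B) * star (x : B) * (Ls v : B) := by
      rw [← hRs u (L x) v, hL (Rs u) x v]
    have h2 : (u : B) * star (L (R x) : B) * (v : B)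
        = (Rs u : B) * star (x : B) * (Ls v : B) := by
      rw [hL u (R x) v, ← hRs u x (Ls v)]
    have hc : (δ : B) = (R (L x) : B) - (L (R x) : B) := by
      simp [hδ]
    rw [hc, star_sub, mul_sub, sub_mul, h1, h2, sub_self]
  have h3 : (δ : B) * star (δ : B) * (δ : B) = 0 := key δ δ
  have h4 : (star (δ : B) * (δ : B)) * (star (δ : B) * (δ : B)) = 0 := by
    calc (star (δ : B) * (δ : B)) * (star (δ : B) * (δ : B))
        = star (δ : B) * ((δ : B) * star (δ : B) * (δ : B)) := by
          simp only [mul_assoc]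
      _ = 0 := by rw [h3, mul_zero]
  have h5 : star (δ : B) * (δ : B) = 0 := by
    have hsa : star (star (δ : B) * (δ : B)) = star (δ : B) * (δ : B) := by
      simp [star_mul, mul_assoc]
    have : ‖star (δ : B) * (δ : B)‖ * ‖star (δ : B) * (δ : B)‖ = 0 := by
      rw [← CStarRing.norm_star_mul_self, hsa, h4, norm_zero]
    have := mul_self_eq_zero.mp this
    exact norm_eq_zero.mp this
  have h6 : (δ : B) = 0 := by
    have : ‖(δ : B)‖ * ‖(δ : B)‖ = 0 := by
      rw [← CStarRing.norm_star_mul_self, h5, norm_zero]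
    exact norm_eq_zero.mp (mul_self_eq_zero.mp this)
  have : δ = 0 := Subtype.ext h6
  have := sub_eq_zero.mp (hδ ▸ this)
  exact this
end

section
/- Let E be a conditional expectation on a C*-algebra A onto a subalgebra B. Then for all c, d ∈ A, E(cd*)E(dc*) ≤ E(cc*)·‖E(dd*)‖ in A. -/
/-- Let `E` be a conditional expectation on a C*-algebra `A` onto a closed
*-subalgebra `B` (here `B` is the range of `E`).  Then for all `c, d ∈ A`,
`E(c d*) E(d c*) ≤ ‖E(d d*)‖ • E(c c*)`. -/
theorem stmt19
    {A : Type*} [CStarAlgebra A] [PartialOrder A] [StarOrderedRing A]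
    (E : A →L[ℂ] A)
    (hEpos : ∀ a : A, 0 ≤ a → 0 ≤ E a)
    (hEidem : ∀ a : A, E (E a) = E a)
    (hEstar : ∀ a : A, E (star a) = star (E a))
    (hEbimod : ∀ a b : A, E (E a * b) = E a * E b ∧ E (b * E a) = E b * E a) :
    ∀ c d : A,
      E (c * star d) * E (d * star c) ≤ ‖E (d * star d)‖ • E (c * star c) := by
  intro c d
  set b := E (c * star d) with hb
  have hsb : star b = E (d * star c) := by
    rw [hb, ← hEstar]; simp [star_mul]
  set q := E (c * star c) with hq
  set k := ‖E (d * star d)‖ with hk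
  set p := b * star b with hp
  have hpnn : (0:A) ≤ p := mul_star_self_nonneg b
  have hqnn : (0:A) ≤ q := hEpos _ (mul_star_self_nonneg c)
  -- bimodule facts
  have hE1 : ∀ y : A, E (b * y) = b * E y := by
    intro y
    have := (hEbimod (c * star d) y).1
    rw [← hb] at this
    rw [← this, hb]
  have hE2 : ∀ y : A, E (y * star b) = E y * star b := by
    intro y
    have := (hEbimod (d * star c) y).2
    rw [← hsb] at this
    rw [← this, hsb]
  -- key inequality
  have key : ∀ t : ℝ, (0:A) ≤ q - (2*t) • p + (t^2) • (b * E (d * star d) * star b) := by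
    intro t
    have hx : (0:A) ≤ E ((c - t • (b * d)) * star (c - t • (b * d))) :=
      hEpos _ (mul_star_self_nonneg _)
    have expand : E ((c - t • (b * d)) * star (c - t • (b * d)))
        = q - (2*t) • p + (t^2) • (b * E (d * star d) * star b) := by
      have hstar : star (c - t • (b * d)) = star c - t • (star d * star b) := by
        simp [star_sub, star_smul, star_mul]
      rw [hstar]
      have hprod : (c - t • (b * d)) * (star c - t • (star d * star b))
          = c * star c - t • (c * (star d * star b)) - t • (b * (d * star c))
            + (t^2) • (b * (d * (star d * star b))) := by
        simp only [sub_mul, mul_sub, smul_mul_assoc, mul_smul_comm, mul_assoc, smul_smul]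
        module
      rw [hprod, map_add, map_sub, map_sub, E.map_smul_of_tower, E.map_smul_of_tower,
        E.map_smul_of_tower]
      have e1 : E (c * (star d * star b)) = p := by
        rw [← mul_assoc, hE2 (c * star d), ← hb]
      have e2 : E (b * (d * star c)) = p := by
        rw [hE1, ← hsb]
      have e3 : E (b * (d * (star d * star b))) = b * E (d * star d) * star b := by
        rw [hE1, ← mul_assoc, hE2 (d * star d), mul_assoc]
      rw [e1, e2, e3, ← hq]
      rw [two_mul, add_smul]
      abel
    rwa [expand] at hx
  -- bound the quadratic term
  have hbd : b * E (d * star d) * star b ≤ k • p := by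
    have h1 : E (d * star d) ≤ algebraMap ℝ A k :=
      IsSelfAdjoint.le_algebraMap_norm_self (IsSelfAdjoint.of_nonneg
        (hEpos _ (mul_star_self_nonneg d)))
    have h2 := star_left_conjugate_le_conjugate h1 (star b)
    rw [star_star] at h2
    calc b * E (d * star d) * star b ≤ b * algebraMap ℝ A k * star b := h2
      _ = k • p := by rw [Algebra.algebraMap_eq_smul_one]; simp [hp, mul_smul_comm,
            smul_mul_assoc]
  have key2 : ∀ t : ℝ, 0 ≤ t → (0:A) ≤ q - (2*t) • p + (t^2 * k) • p := by
    intro t ht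
    have h3 := key t
    have h4 : (t^2) • (b * E (d * star d) * star b) ≤ (t^2) • (k • p) :=
      smul_le_smul_of_nonneg_left hbd (sq_nonneg t)
    calc (0:A) ≤ q - (2*t) • p + (t^2) • (b * E (d * star d) * star b) := h3
      _ ≤ q - (2*t) • p + (t^2 * k) • p := by
          rw [mul_smul (t^2) k]; exact add_le_add_right h4 _
  have hknn : (0:ℝ) ≤ k := norm_nonneg _
  rw [← hsb, ← hp]
  rcases eq_or_lt_of_le hknn with hk0 | hkpos
  · -- k = 0
    have hple : ∀ t : ℝ, 0 ≤ t → (2*t) • p ≤ q := by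
      intro t ht
      have := key2 t ht
      rw [← hk0, mul_zero, zero_smul, add_zero, sub_nonneg] at this
      exact this
    have hnorm : ∀ t : ℝ, 0 ≤ t → (2*t) * ‖p‖ ≤ ‖q‖ := by
      intro t ht
      have h5 : ‖(2*t) • p‖ ≤ ‖q‖ :=
        CStarAlgebra.norm_le_norm_of_nonneg_of_le
          (smul_nonneg (by positivity) hpnn) (hple t ht)
      rwa [norm_smul, Real.norm_eq_abs, abs_of_nonneg (by positivity)] at h5
    have hp0 : p = 0 := by
      by_contra hne
      have hppos : 0 < ‖p‖ := norm_pos_iff.mpr hne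
      have h6 := hnorm ((‖q‖ + 1) / (2 * ‖p‖)) (by positivity)
      have heq : 2 * ((‖q‖ + 1) / (2 * ‖p‖)) * ‖p‖ = ‖q‖ + 1 := by
        field_simp
      linarith
    rw [hp0, ← hk0, zero_smul]
  · -- k > 0
    have := key2 (1/k) (by positivity)
    have heq : q - (2*(1/k)) • p + ((1/k)^2 * k) • p = q - (1/k) • p := by
      rw [sub_add, ← sub_smul]
      congr 2
      field_simp
      ring
    rw [heq, sub_nonneg] at this
    calc p = k • ((1/k) • p) := by rw [smul_smul]; field_simp; rw [one_smul]
      _ ≤ k • q := smul_le_smul_of_nonneg_left this hknn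
end
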